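/- For every integer d ≥ 2, n(d−1,d) = 3·2^{d−2}; that is, the maximum size of a (d−1)-neighborly code in S^d equals 3·2^{d−2}. -/

import Mathlib

/-- The three-letter alphabet `S = {0, 1, ∗}`. -/
inductive Tern | zero | one | star
deriving DecidableEq

instance : Fintype Tern where
  elems := {Tern.zero, Tern.one, Tern.star}
  complete := fun x => by cases x <;> simp

/-- `clash x y` is true iff both `x, y ∈ {0,1}` and `x ≠ y`. -/
def clash : Tern → Tern → Bool
  | Tern.zero, Tern.one => true
  | Tern.one, Tern.zero => true
  | _, _ => false

/-- `dist u v`: the number of positions where both letters are binary and they differ. -/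
def dist {d : ℕ} (u v : Fin d → Tern) : ℕ :=
  (Finset.univ.filter (fun i => clash (u i) (v i))).card

/-- A `k`-neighborly code in `S^d`: every two distinct members `u, v`
satisfy `1 ≤ dist(u,v) ≤ k`. -/
def IsNeighborlyCode (k d : ℕ) (V : Finset (Fin d → Tern)) : Prop :=
  ∀ u ∈ V, ∀ v ∈ V, u ≠ v → 1 ≤ dist u v ∧ dist u v ≤ k

/-- `n(k,d)`: the maximum size of a `k`-neighborly code in `S^d`. -/
noncomputable def nMax (k d : ℕ) : ℕ :=
  sSup {m : ℕ | ∃ V : Finset (Fin d → Tern), IsNeighborlyCode k d V ∧ V.card = m}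

namespace NAux

def b2t : Bool → Tern | false => Tern.zero | true => Tern.one

lemma b2t_inj : Function.Injective b2t := by
  intro a b h; cases a <;> cases b <;> simp [b2t] at h ⊢

lemma clash_b2t (a b : Bool) : clash (b2t a) (b2t b) = (a != b) := by
  cases a <;> cases b <;> rfl

lemma one_le_dist {d : ℕ} {u v : Fin d → Tern} (i : Fin d)
    (h : clash (u i) (v i) = true) : 1 ≤ dist u v := by
  show 1 ≤ (Finset.univ.filter (fun i => clash (u i) (v i))).card
  exact Finset.card_pos.mpr ⟨i, by simp [h]⟩

lemma dist_le_pred {d : ℕ} {u v : Fin d → Tern} (i : Fin d)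
    (h : clash (u i) (v i) = false) : dist u v ≤ d - 1 := by
  have hsub : Finset.univ.filter (fun j => clash (u j) (v j)) ⊆ Finset.univ.erase i := by
    intro j hj
    rw [Finset.mem_filter] at hj
    refine Finset.mem_erase.mpr ⟨?_, Finset.mem_univ _⟩
    rintro rfl; rw [h] at hj; exact absurd hj.2 (by simp)
  calc dist u v ≤ (Finset.univ.erase i).card := Finset.card_le_card hsub
    _ = d - 1 := by rw [Finset.card_erase_of_mem (Finset.mem_univ _)]; simp

def compatB : Tern → Bool → Bool
  | Tern.zero, false => true
  | Tern.one, true => true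
  | Tern.star, _ => true
  | _, _ => false

def Box {d : ℕ} (u : Fin d → Tern) : Finset (Fin d → Bool) :=
  Finset.univ.filter (fun x => ∀ i, compatB (u i) (x i) = true)

lemma box_nonempty {d : ℕ} (u : Fin d → Tern) : (Box u).Nonempty := by
  refine ⟨fun i => decide (u i = Tern.one), ?_⟩
  simp only [Box, Finset.mem_filter, Finset.mem_univ, true_and]
  intro i; cases h : u i <;> simp [compatB, h]

lemma two_le_box_card {d : ℕ} (u : Fin d → Tern) (i0 : Fin d) (h0 : u i0 = Tern.star) :
    2 ≤ (Box u).card := by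
  set x : Fin d → Bool := fun i => decide (u i = Tern.one) with hx
  have hxm : x ∈ Box u := by
    simp only [Box, Finset.mem_filter, Finset.mem_univ, true_and]
    intro i; cases h : u i <;> simp [compatB, hx, h]
  have hym : Function.update x i0 true ∈ Box u := by
    simp only [Box, Finset.mem_filter, Finset.mem_univ, true_and]
    intro i
    rcases eq_or_ne i i0 with rfl | hne
    · simp [h0, compatB]
    · rw [Function.update_of_ne hne]
      cases h : u i <;> simp [compatB, hx, h]
  refine Finset.one_lt_card.mpr ⟨x, hxm, Function.update x i0 true, hym, ?_⟩
  intro hcontra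
  have := congrFun hcontra i0
  simp [hx, h0] at this

lemma box_disjoint {d : ℕ} {u v : Fin d → Tern} (h : 1 ≤ dist u v) :
    Disjoint (Box u) (Box v) := by
  obtain ⟨i, hi⟩ := Finset.card_pos.mp h
  rw [Finset.mem_filter] at hi
  have hclash := hi.2
  rw [Finset.disjoint_left]
  intro x hxu hxv
  simp only [Box, Finset.mem_filter, Finset.mem_univ, true_and] at hxu hxv
  have h1 := hxu i
  have h2 := hxv i
  cases hu : u i <;> cases hv : v i <;> rw [hu, hv] at hclash <;>
    simp [clash] at hclash <;> rw [hu] at h1 <;> rw [hv] at h2 <;>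
    cases hxi : x i <;> rw [hxi] at h1 h2 <;> simp [compatB] at h1 h2



def t2b {d : ℕ} (u : Fin d → Tern) : Fin d → Bool := fun i => decide (u i = Tern.one)

lemma upper_bound {d : ℕ} (hd : 2 ≤ d) (V : Finset (Fin d → Tern))
    (hV : IsNeighborlyCode (d - 1) d V) : V.card ≤ 3 * 2 ^ (d - 2) := by
  classical
  obtain ⟨e, rfl⟩ : ∃ e, d = e + 2 := ⟨d - 2, by omega⟩
  -- boxes are pairwise disjoint
  have hdisj : ∀ u ∈ V, ∀ v ∈ V, u ≠ v → Disjoint (Box u) (Box v) :=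
    fun u hu v hv h => box_disjoint (hV u hu v hv h).1
  have hsum : ∑ u ∈ V, (Box u).card ≤ 2 ^ (e + 2) := by
    rw [← Finset.card_biUnion hdisj]
    calc (V.biUnion Box).card ≤ Fintype.card (Fin (e + 2) → Bool) := Finset.card_le_univ _
      _ = 2 ^ (e + 2) := by simp
  set A := V.filter (fun u => ∀ i, u i ≠ Tern.star) with hA
  set B := V.filter (fun u => ¬ ∀ i, u i ≠ Tern.star) with hB
  have hAB : A.card + B.card = V.card := Finset.card_filter_add_card_filter_not _
  -- bound on binary part
  have hAbound : 2 * A.card ≤ 2 ^ (e + 2) := by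
    set A' := A.image t2b with hA'
    set A'' := A'.image (fun x : Fin (e + 2) → Bool => fun i => !(x i)) with hA''
    have hinjOn : Set.InjOn t2b (↑A : Set (Fin (e + 2) → Tern)) := by
      intro u hu v hv h
      rw [hA, Finset.coe_filter, Set.mem_setOf_eq] at hu hv
      funext i
      have hi := congrFun h i
      simp only [t2b] at hi
      have h1 := hu.2 i
      have h2 := hv.2 i
      cases hui : u i <;> cases hvi : v i <;> rw [hui] at hi h1 <;> rw [hvi] at hi h2 <;>
        simp_all
    have hcard' : A'.card = A.card := Finset.card_image_of_injOn hinjOn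
    have hcard'' : A''.card = A'.card := by
      apply Finset.card_image_of_injective
      intro x y h
      funext i
      have := congrFun h i
      simpa using this
    have hdisjA : Disjoint A' A'' := by
      rw [Finset.disjoint_left]
      intro x hx hx'
      rw [hA', Finset.mem_image] at hx
      obtain ⟨u, hu, hux⟩ := hx
      rw [hA'', Finset.mem_image] at hx'
      obtain ⟨y, hy, hyx⟩ := hx'
      rw [hA', Finset.mem_image] at hy
      obtain ⟨v, hv, hvy⟩ := hy
      subst hvy
      rw [hA, Finset.mem_filter] at hu hv
      -- t2b u = fun i => ! t2b v i
      have key : ∀ i, (decide (u i = Tern.one)) = !(decide (v i = Tern.one)) := by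
        intro i
        have := (congrFun hux i).trans (congrFun hyx i).symm
        simpa [t2b] using this
      have hne : u ≠ v := by
        rintro rfl
        have := key (0 : Fin (e + 2))
        cases h : u (0 : Fin (e + 2)) <;> rw [h] at this <;> simp at this
      have hdist : dist u v = e + 2 := by
        show (Finset.univ.filter (fun i => clash (u i) (v i))).card = e + 2
        have : Finset.univ.filter (fun i => clash (u i) (v i)) = Finset.univ := by
          refine Finset.eq_univ_of_forall (fun i => ?_)
          rw [Finset.mem_filter]
          refine ⟨Finset.mem_univ _, ?_⟩
          have hk := key i
          have h1 := hu.2 i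
          have h2 := hv.2 i
          cases hui : u i <;> cases hvi : v i <;> rw [hui] at hk h1 <;> rw [hvi] at hk h2 <;>
            simp_all [clash]
        rw [this]; simp
      have := (hV u hu.1 v hv.1 hne).2
      rw [hdist] at this
      omega
    have : A'.card + A''.card ≤ 2 ^ (e + 2) := by
      rw [← Finset.card_union_of_disjoint hdisjA]
      calc (A' ∪ A'').card ≤ Fintype.card (Fin (e + 2) → Bool) := Finset.card_le_univ _
        _ = 2 ^ (e + 2) := by simp
    omega
  -- lower bounds on box sizes
  have hsumA : A.card * 1 ≤ ∑ u ∈ A, (Box u).card := by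
    rw [← smul_eq_mul]
    exact Finset.card_nsmul_le_sum _ _ _ (fun u _ => Finset.card_pos.mpr (box_nonempty u))
  have hsumB : B.card * 2 ≤ ∑ u ∈ B, (Box u).card := by
    rw [← smul_eq_mul]
    refine Finset.card_nsmul_le_sum _ _ _ (fun u hu => ?_)
    rw [hB, Finset.mem_filter] at hu
    push_neg at hu
    obtain ⟨i0, hi0⟩ := hu.2
    exact two_le_box_card u i0 hi0
  have hsplit : ∑ u ∈ A, (Box u).card + ∑ u ∈ B, (Box u).card = ∑ u ∈ V, (Box u).card :=
    Finset.sum_filter_add_sum_filter_not _ _ _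
  have hpow : 2 ^ (e + 2) = 4 * 2 ^ e := by ring
  have hgoal : (3 : ℕ) * 2 ^ (e + 2 - 2) = 3 * 2 ^ e := by norm_num
  rw [hgoal]
  omega

def gmap {e : ℕ} (x : Fin (e + 2) → Bool) : Fin (e + 2) → Tern := fun i =>
  if x 0 = true then
    (if i = 0 then Tern.one else if i = 1 then Tern.star else b2t (x i))
  else b2t (x i)

lemma card_class {e : ℕ} (a b : Bool) :
    (Finset.univ.filter (fun x : Fin (e + 2) → Bool => x 0 = a ∧ x 1 = b)).card = 2 ^ e := by
  classical
  have hone : (1 : Fin (e + 2)) = Fin.succ 0 := by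
    apply Fin.ext
    simp [Fin.val_one]
  have himg : Finset.univ.filter (fun x : Fin (e + 2) → Bool => x 0 = a ∧ x 1 = b)
      = Finset.univ.image (fun x : Fin e → Bool => Fin.cons a (Fin.cons b x)) := by
    ext y
    simp only [Finset.mem_filter, Finset.mem_univ, true_and, Finset.mem_image]
    constructor
    · rintro ⟨h0, h1⟩
      refine ⟨fun i => y i.succ.succ, ?_⟩
      funext j
      refine Fin.cases ?_ (fun i => ?_) j
      · simpa using h0.symm
      · rw [Fin.cons_succ]
        refine Fin.cases ?_ (fun i' => ?_) i
        · rw [Fin.cons_zero, ← hone]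
          exact h1.symm
        · rw [Fin.cons_succ]
    · rintro ⟨x, rfl⟩
      refine ⟨by rw [Fin.cons_zero], ?_⟩
      rw [hone, Fin.cons_succ, Fin.cons_zero]
  rw [himg, Finset.card_image_of_injective _ ?_, Finset.card_univ]
  · simp
  · intro x y h
    have h' : (Fin.cons a (Fin.cons b x) : Fin (e + 2) → Bool) = Fin.cons a (Fin.cons b y) := h
    funext i
    have hi := congrFun h' i.succ.succ
    rwa [Fin.cons_succ, Fin.cons_succ, Fin.cons_succ, Fin.cons_succ] at hi

lemma exists_code (e : ℕ) :
    ∃ V : Finset (Fin (e + 2) → Tern),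
      IsNeighborlyCode (e + 1) (e + 2) V ∧ V.card = 3 * 2 ^ e := by
  classical
  set W := Finset.univ.filter (fun x : Fin (e + 2) → Bool => x 0 = true → x 1 = false) with hW
  have hWcard : W.card = 3 * 2 ^ e := by
    have hWeq : W = Finset.univ \
        (Finset.univ.filter (fun x : Fin (e + 2) → Bool => x 0 = true ∧ x 1 = true)) := by
      ext x
      simp only [hW, Finset.mem_filter, Finset.mem_univ, true_and, Finset.mem_sdiff]
      cases h0 : x 0 <;> cases h1 : x 1 <;> simp
    rw [hWeq, Finset.card_sdiff_of_subset (Finset.filter_subset _ _ |>.trans (by simp))]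
    · rw [card_class, Finset.card_univ]
      simp only [Fintype.card_fun, Fintype.card_bool, Fintype.card_fin]
      have : (2:ℕ) ^ (e + 2) = 4 * 2 ^ e := by ring
      omega
  have hinj : Set.InjOn gmap (↑W : Set (Fin (e + 2) → Bool)) := by
    intro x hx y hy h
    rw [hW, Finset.coe_filter, Set.mem_setOf_eq] at hx hy
    have h00 := congrFun h 0
    have hx0y0 : x 0 = y 0 := by
      cases hx0 : x 0 <;> cases hy0 : y 0 <;> first
        | rfl
        | (exfalso; simp [gmap, hx0, hy0, b2t] at h00)
    funext i
    cases hx0 : x 0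
    · have hy0 : y 0 = false := by rw [← hx0y0, hx0]
      have hi := congrFun h i
      simp [gmap, hx0, hy0] at hi
      exact b2t_inj hi
    · have hy0 : y 0 = true := by rw [← hx0y0, hx0]
      rcases eq_or_ne i 0 with rfl | h0
      · rw [hx0, hy0]
      rcases eq_or_ne i 1 with rfl | h1
      · rw [hx.2 hx0, hy.2 hy0]
      · have hi := congrFun h i
        simp [gmap, hx0, hy0, h0, h1] at hi
        exact b2t_inj hi
  refine ⟨W.image gmap, ?_, by rw [Finset.card_image_of_injOn hinj, hWcard]⟩
  rintro u hu v hv hne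
  obtain ⟨x, hx, rfl⟩ := Finset.mem_image.mp hu
  obtain ⟨y, hy, rfl⟩ := Finset.mem_image.mp hv
  have hxy : x ≠ y := fun hc => hne (by rw [hc])
  rw [hW, Finset.mem_filter] at hx hy
  cases hx0 : x 0 <;> cases hy0 : y 0
  · -- both binary-type
    obtain ⟨i, hi⟩ : ∃ i, x i ≠ y i := Function.ne_iff.mp hxy
    constructor
    · refine one_le_dist i ?_
      simp only [gmap, hx0, hy0, Bool.false_eq_true, if_false]
      rw [clash_b2t]
      simpa using hi
    · refine dist_le_pred 0 ?_
      simp [gmap, hx0, hy0, b2t, clash]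
  · constructor
    · refine one_le_dist 0 ?_
      simp [gmap, hx0, hy0, b2t, clash]
    · refine dist_le_pred 1 ?_
      cases h1 : x 1 <;> simp [gmap, hx0, hy0, h1, b2t, clash]
  · constructor
    · refine one_le_dist 0 ?_
      simp [gmap, hx0, hy0, b2t, clash]
    · refine dist_le_pred 1 ?_
      cases h1 : y 1 <;> simp [gmap, hx0, hy0, h1, b2t, clash]
  · have hx1 : x 1 = false := hx.2 hx0
    have hy1 : y 1 = false := hy.2 hy0
    obtain ⟨i, hi⟩ : ∃ i, x i ≠ y i := Function.ne_iff.mp hxy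
    have hi0 : i ≠ 0 := by rintro rfl; rw [hx0, hy0] at hi; exact hi rfl
    have hi1 : i ≠ 1 := by rintro rfl; rw [hx1, hy1] at hi; exact hi rfl
    constructor
    · refine one_le_dist i ?_
      simp only [gmap, hx0, hy0, if_true, if_neg hi0, if_neg hi1]
      rw [clash_b2t]
      simpa using hi
    · refine dist_le_pred 1 ?_
      simp [gmap, hx0, hy0, clash]

end NAux

/-- For every `d ≥ 2`, `n(d-1,d) = 3·2^{d-2}`. -/
theorem n_dsub1_d_eq (d : ℕ) (hd : 2 ≤ d) : nMax (d - 1) d = 3 * 2 ^ (d - 2) := by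
  obtain ⟨e, rfl⟩ : ∃ e, d = e + 2 := ⟨d - 2, by omega⟩
  obtain ⟨V, hV, hVcard⟩ := NAux.exists_code e
  have hmem : 3 * 2 ^ e ∈
      {m : ℕ | ∃ V : Finset (Fin (e + 2) → Tern),
        IsNeighborlyCode (e + 2 - 1) (e + 2) V ∧ V.card = m} := ⟨V, hV, hVcard⟩
  have hub : ∀ m ∈ {m : ℕ | ∃ V : Finset (Fin (e + 2) → Tern),
      IsNeighborlyCode (e + 2 - 1) (e + 2) V ∧ V.card = m}, m ≤ 3 * 2 ^ e := by
    rintro m ⟨V, hV, rfl⟩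
    exact NAux.upper_bound (by omega) V hV
  have : (3 : ℕ) * 2 ^ (e + 2 - 2) = 3 * 2 ^ e := rfl
  rw [this]
  unfold nMax
  exact le_antisymm (csSup_le ⟨_, hmem⟩ hub) (le_csSup ⟨3 * 2 ^ e, fun m hm => hub m hm⟩ hmem)
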